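/- For any finite nonempty subset A ⊆ ℤⁿ, the set A is analogous (in the semigroup of finite subsets of ℤⁿ under Minkowski addition) to Δ(A)_ℤ, the set of lattice points in the convex hull of A; that is, there exists a finite set C with A + C = Δ(A)_ℤ + C. -/

import Mathlib

open Pointwise

/-- The canonical embedding `ℤⁿ → ℝⁿ`. -/
def latticeEmb (n : ℕ) : (Fin n → ℤ) → (Fin n → ℝ) := fun v i => (v i : ℝ)

/-- The set of lattice points of the convex hull of `A ⊆ ℤⁿ`. -/
def hullLatticePts (n : ℕ) (A : Set (Fin n → ℤ)) : Set (Fin n → ℤ) :=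
  {v | latticeEmb n v ∈ convexHull ℝ (latticeEmb n '' A)}

/-- Key combinatorial lemma: if `x ∈ (m+1) • conv T` where `m = |T|`, then some vertex
`a ∈ T` satisfies `x - a ∈ m • conv T`. -/
lemma key_step {E : Type*} [AddCommGroup E] [Module ℝ E] [DecidableEq E]
    (T : Finset E) (hT : T.Nonempty)
    {x : E} (hx : x ∈ ((T.card : ℝ) + 1) • convexHull ℝ (T : Set E)) :
    ∃ a ∈ T, x - a ∈ (T.card : ℝ) • convexHull ℝ (T : Set E) := by
  set m : ℝ := (T.card : ℝ) with hm
  have hm1 : (1 : ℝ) ≤ m := by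
    have h := Finset.card_pos.2 hT
    rw [hm]; exact_mod_cast h
  have hm0 : (0 : ℝ) < m := lt_of_lt_of_le one_pos hm1
  obtain ⟨y, hy, rfl⟩ := hx
  rw [Finset.convexHull_eq] at hy
  obtain ⟨w, hw0, hw1, hwy⟩ := hy
  -- find a vertex with weight ≥ 1/m
  have hex : ∃ t ∈ T, 1 / m ≤ w t := by
    by_contra h
    push_neg at h
    have : (∑ t ∈ T, w t) < ∑ t ∈ T, 1 / m :=
      Finset.sum_lt_sum_of_nonempty hT h
    rw [hw1, Finset.sum_const, nsmul_eq_mul] at this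
    rw [mul_one_div, div_self (ne_of_gt hm0)] at this
    exact lt_irrefl _ this
  obtain ⟨t₀, ht₀, hwt₀⟩ := hex
  refine ⟨t₀, ht₀, ?_⟩
  set w' : E → ℝ := fun t => ((m + 1) * w t - if t = t₀ then 1 else 0) / m with hw'
  have hw'0 : ∀ t ∈ T, 0 ≤ w' t := by
    intro t ht
    have hnn : 0 ≤ (m + 1) * w t := mul_nonneg (by linarith) (hw0 t ht)
    simp only [hw']
    apply div_nonneg _ hm0.le
    split_ifs with h
    · subst h
      have h2 : (m + 1) * (1 / m) ≤ (m + 1) * w t :=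
        mul_le_mul_of_nonneg_left hwt₀ (by linarith)
      have h3 : (1 : ℝ) ≤ (m + 1) * (1 / m) := by
        rw [mul_one_div, le_div_iff₀ hm0]
        linarith
      linarith
    · linarith
  have hw'1 : ∑ t ∈ T, w' t = 1 := by
    simp only [hw']
    rw [← Finset.sum_div]
    rw [Finset.sum_sub_distrib, ← Finset.mul_sum, hw1, Finset.sum_ite_eq' T t₀ (fun _ => (1:ℝ)),
      if_pos ht₀]
    field_simp
    ring
  refine ⟨T.centerMass w' id, ?_, ?_⟩
  · exact T.centerMass_mem_convexHull hw'0 (by rw [hw'1]; exact one_pos) (fun i hi => hi)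
  · show m • T.centerMass w' id = (m + 1) • y - t₀
    rw [Finset.centerMass_eq_of_sum_1 _ _ hw'1, ← hwy,
      Finset.centerMass_eq_of_sum_1 _ _ hw1, Finset.smul_sum]
    have : ∀ t ∈ T, m • (w' t • (id t : E)) = ((m+1) * w t) • (id t : E)
        - (if t = t₀ then 1 else 0 : ℝ) • (id t : E) := by
      intro t ht
      rw [smul_smul, ← sub_smul]
      congr 1
      simp only [hw']
      field_simp
    rw [Finset.sum_congr rfl this, Finset.sum_sub_distrib]
    have h2 : ∑ t ∈ T, ((if t = t₀ then 1 else 0 : ℝ)) • (id t : E) = t₀ := by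
      have hcongr : ∀ t ∈ T, ((if t = t₀ then 1 else 0 : ℝ)) • (id t : E)
          = if t = t₀ then t₀ else 0 := by
        intro t _
        split_ifs with h
        · rw [h]; simp
        · simp
      rw [Finset.sum_congr rfl hcongr, Finset.sum_ite_eq' T t₀ (fun _ => t₀), if_pos ht₀]
    rw [h2]
    congr 1
    rw [Finset.smul_sum]
    exact Finset.sum_congr rfl fun t ht => by rw [smul_smul]

/-- any finite nonempty `A ⊆ ℤⁿ` is analogous, in the semigroup of finite
nonempty subsets of `ℤⁿ` under Minkowski addition, to the set `Δ(A)_ℤ` of lattice points of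
its convex hull: there is a finite nonempty `C` with `A + C = Δ(A)_ℤ + C`. -/
theorem analogous_to_hullLatticePts (n : ℕ) (A : Set (Fin n → ℤ))
    (hAfin : A.Finite) (hAne : A.Nonempty) :
    ∃ C : Set (Fin n → ℤ), C.Finite ∧ C.Nonempty ∧
      A + C = hullLatticePts n A + C := by
  classical
  set e := latticeEmb n with he
  have hefin : (e '' A).Finite := hAfin.image e
  set T : Finset (Fin n → ℝ) := hefin.toFinset with hT
  have hTc : (T : Set (Fin n → ℝ)) = e '' A := hefin.coe_toFinset
  have hTne : T.Nonempty := by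
    rw [← Finset.coe_nonempty, hTc]
    exact hAne.image e
  set m : ℝ := (T.card : ℝ) with hm
  have hm1 : (1 : ℝ) ≤ m := by
    have h := Finset.card_pos.2 hTne
    rw [hm]; exact_mod_cast h
  have hm0 : (0 : ℝ) < m := lt_of_lt_of_le one_pos hm1
  set K : Set (Fin n → ℝ) := convexHull ℝ (e '' A) with hK
  have hKconv : Convex ℝ K := convex_convexHull ℝ _
  set C : Set (Fin n → ℤ) := {v | e v ∈ m • K} with hC
  -- e is additive / subtractive
  have headd : ∀ u v : Fin n → ℤ, e (u + v) = e u + e v := by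
    intro u v; funext i; simp [he, latticeEmb]
  have hesub : ∀ u v : Fin n → ℤ, e (u - v) = e u - e v := by
    intro u v; funext i; simp [he, latticeEmb]
  -- C is finite
  have hCfin : C.Finite := by
    have hKcomp : IsCompact (m • K) := (hefin.isCompact_convexHull (𝕜 := ℝ)).smul m
    obtain ⟨r, hr⟩ := hKcomp.isBounded.subset_closedBall 0
    have key : ∀ v ∈ C, ∀ i, v i ∈ Set.Icc (-⌈r⌉) ⌈r⌉ := by
      intro v hv i
      have h1 : e v ∈ Metric.closedBall 0 r := hr hv
      rw [Metric.mem_closedBall, dist_zero_right] at h1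
      have h2 : ‖e v i‖ ≤ ‖e v‖ := norm_le_pi_norm (e v) i
      have h3 : |(v i : ℝ)| ≤ r := by
        have : ‖e v i‖ = |(v i : ℝ)| := by simp [he, latticeEmb]
        rw [this] at h2; linarith
      rw [abs_le] at h3
      constructor
      · have : (-⌈r⌉ : ℝ) ≤ (v i : ℝ) := by
          have := Int.le_ceil r
          linarith
        exact_mod_cast this
      · have : ((v i : ℝ)) ≤ (⌈r⌉ : ℝ) := by
          have := Int.le_ceil r
          linarith
        exact_mod_cast this
    have hsub : C ⊆ Set.pi Set.univ (fun _ : Fin n => Set.Icc (-⌈r⌉) ⌈r⌉) := by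
      intro v hv
      rw [Set.mem_pi]
      intro i _
      exact key v hv i
    exact Set.Finite.subset (Set.Finite.pi fun _ => Set.finite_Icc _ _) hsub
  -- C is nonempty
  obtain ⟨a₀, ha₀⟩ := hAne
  have hCne : C.Nonempty := by
    refine ⟨(T.card : ℤ) • a₀, ?_⟩
    have h1 : e ((T.card : ℤ) • a₀) = m • e a₀ := by
      funext i; simp [he, latticeEmb, hm, mul_comm]
    rw [hC, Set.mem_setOf_eq, h1]
    exact Set.smul_mem_smul_set (subset_convexHull ℝ _ ⟨a₀, ha₀, rfl⟩)
  refine ⟨C, hCfin, hCne, ?_⟩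
  apply Set.Subset.antisymm
  · apply Set.add_subset_add_right
    intro a ha
    exact subset_convexHull ℝ (e '' A) ⟨a, ha, rfl⟩
  · rintro x ⟨d, hd, c, hc, rfl⟩
    have hsum : e (d + c) ∈ (m + 1) • K := by
      have h1 : (m + 1) • K = (1 : ℝ) • K + m • K := by
        rw [show m + 1 = 1 + m by ring]
        exact hKconv.add_smul zero_le_one hm0.le
      rw [h1, one_smul, headd]
      exact Set.add_mem_add hd hc
    have hx : e (d + c) ∈ ((T.card : ℝ) + 1) • convexHull ℝ (T : Set (Fin n → ℝ)) := by
      rw [hTc]; exact hsum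
    obtain ⟨ae, haeT, hae⟩ := key_step T hTne hx
    have haeT' : ae ∈ e '' A := by rw [← hTc]; exact Finset.mem_coe.2 haeT
    obtain ⟨a, haA, rfl⟩ := haeT'
    rw [hTc] at hae
    have hmem : d + c - a ∈ C := by
      rw [hC, Set.mem_setOf_eq, hesub]
      exact hae
    show d + c ∈ A + C
    have heq : d + c = a + (d + c - a) := by ring
    rw [heq]
    exact Set.add_mem_add haA hmem
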